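/- Let b, λ, ε > 0, m ≥ 0, χ > |1-m|, and let U, V be given by U(x) = (θ²)/(2β)(1 + θr x/β)^{-χ/r} and V(x) = (θ/β)(1+θrx/β)^{-1}, where θ = λ(χ+1-m), β = ε(χ+m+1)b^{1-m}, r = (χ+m-1)/2. Then (1/U)'' - (χV/U)' = 0 on (0,∞). -/

import Mathlib

theorem weight_identity
    (b lam eps m chi : ℝ) (hb : 0 < b) (hlam : 0 < lam) (heps : 0 < eps)
    (hm : 0 ≤ m) (hchi : |1 - m| < chi)
    (theta beta r : ℝ)
    (htheta : theta = lam * (chi + 1 - m))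
    (hbeta : beta = eps * (chi + m + 1) * b ^ (1 - m))
    (hr : r = (chi + m - 1) / 2)
    (U V : ℝ → ℝ)
    (hU : U = fun x => theta ^ 2 / (2 * beta) * (1 + theta * r * x / beta) ^ (-(chi / r)))
    (hV : V = fun x => theta / beta * (1 + theta * r * x / beta) ^ (-1 : ℝ)) :
    ∀ x ∈ Set.Ioi (0 : ℝ),
      deriv (deriv (fun y => 1 / U y)) x - deriv (fun y => chi * V y / U y) x = 0 := by
  obtain ⟨hc1, hc2⟩ := abs_lt.mp hchi
  have hθ : 0 < theta := by rw [htheta]; nlinarith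
  have hr0 : 0 < r := by rw [hr]; nlinarith
  have hχ : 0 < chi := lt_of_le_of_lt (abs_nonneg _) hchi
  have hβ : 0 < beta := by
    have hsum : 0 < chi + m + 1 := by nlinarith
    rw [hbeta]
    exact mul_pos (mul_pos heps hsum) (Real.rpow_pos_of_pos hb _)
  set a := theta * r / beta with ha
  have hapos : 0 < a := by positivity
  have harw : ∀ y : ℝ, theta * r * y / beta = a * y := fun y => by rw [ha]; ring
  set e := chi / r with he
  have ht : ∀ y ∈ Set.Ioi (0:ℝ), 0 < 1 + a * y := by
    intro y hy
    have hy' : 0 < y := hy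
    nlinarith
  set f : ℝ → ℝ := fun y => 2 * beta / theta ^ 2 * (1 + a * y) ^ e with hf
  set g : ℝ → ℝ := fun y => 2 * chi / theta * (1 + a * y) ^ (e - 1) with hg
  have hA : ∀ y ∈ Set.Ioi (0:ℝ), 1 / U y = f y := by
    intro y hy
    have hty := ht y hy
    rw [hU, hf]
    simp only [harw]
    rw [Real.rpow_neg hty.le]
    have h1 : (1 + a * y) ^ e ≠ 0 := (Real.rpow_pos_of_pos hty e).ne'
    field_simp
  have hB : ∀ y ∈ Set.Ioi (0:ℝ), chi * V y / U y = g y := by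
    intro y hy
    have hty := ht y hy
    rw [hU, hV, hg]
    simp only [harw]
    rw [Real.rpow_neg_one, Real.rpow_neg hty.le, Real.rpow_sub hty, Real.rpow_one]
    have h1 : (1 + a * y) ^ e ≠ 0 := (Real.rpow_pos_of_pos hty e).ne'
    field_simp
  have hC : ∀ y ∈ Set.Ioi (0:ℝ), HasDerivAt f (g y) y := by
    intro y hy
    have hty := ht y hy
    have h0 : HasDerivAt (fun y : ℝ => 1 + a * y) a y := by
      simpa using ((hasDerivAt_id y).const_mul a).const_add 1
    have h2 := ((h0.rpow_const (p := e) (Or.inl hty.ne'))).const_mul (2 * beta / theta ^ 2)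
    refine h2.congr_deriv ?_
    rw [hg, he, ha]
    field_simp
  have hdg : ∀ y ∈ Set.Ioi (0:ℝ), deriv f y = g y := fun y hy => (hC y hy).deriv
  intro x hx
  have hmem : Set.Ioi (0:ℝ) ∈ nhds x := isOpen_Ioi.mem_nhds hx
  have hgeq : (fun y => chi * V y / U y) =ᶠ[nhds x] g := Filter.eventuallyEq_of_mem hmem hB
  have hd1 : deriv (fun y => 1 / U y) =ᶠ[nhds x] g := by
    filter_upwards [hmem] with y hy
    have hmem' : Set.Ioi (0:ℝ) ∈ nhds y := isOpen_Ioi.mem_nhds hy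
    have hfe : (fun z => 1 / U z) =ᶠ[nhds y] f := Filter.eventuallyEq_of_mem hmem' hA
    rw [hfe.deriv_eq, hdg y hy]
  rw [hd1.deriv_eq, hgeq.deriv_eq, sub_self]
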